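/- Suppose |a|_p < α = β and |d|_p < α for f(x) = (ax²+bx)/(x²+dx+b) on ℂ_p. Then the fixed point x₂ = a-d satisfies |x₂|_p < α and |f'(x₂)|_p = 1, i.e., x₂ is an indifferent fixed point. -/

import Mathlib

open IsUltrametricDist in
/-- If `‖y‖ < ‖x‖` then `‖x + y‖ = ‖x‖` in an ultrametric group. -/
lemma stmt6_aux {K : Type*} [NormedField K] [IsUltrametricDist K]
    {x y : K} (h : ‖y‖ < ‖x‖) : ‖x + y‖ = ‖x‖ := by
  have := norm_add_eq_max_of_norm_ne_norm (x := x) (y := y) (by linarith)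
  rw [this, max_eq_left h.le]

/-- Case `|a| < α = β` and `|d| < α`: the fixed point `x₂ = a - d` satisfies
`|x₂| < α` and `|f'(x₂)| = 1`, i.e. `x₂` is indifferent. -/
theorem stmt6 {K : Type*} [NontriviallyNormedField K] [IsAlgClosed K]
    [IsUltrametricDist K] (a b d z₁ z₂ : K) (hab : a*b ≠ 0) (had : a ≠ d)
    (hsum : z₁ + z₂ = -d) (hprod : z₁ * z₂ = b)
    (hβ : ‖z₂‖ = ‖z₁‖) (ha : ‖a‖ < ‖z₁‖) (hd : ‖d‖ < ‖z₁‖) :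
    ‖a - d‖ < ‖z₁‖ ∧
    ∃ L : K, HasDerivAt (fun x : K => (a*x^2 + b*x)/(x^2 + d*x + b)) L (a - d) ∧
      ‖L‖ = 1 := by
  set α := ‖z₁‖ with hα
  have hαpos : 0 < α := by
    have : a ≠ 0 := fun h => hab (by simp [h])
    calc (0:ℝ) ≤ ‖a‖ := norm_nonneg _
    _ < α := ha
  set x := a - d with hxdef
  have hx : ‖x‖ < α := by
    calc ‖a - d‖ = ‖a + (-d)‖ := by ring_nf
    _ ≤ max ‖a‖ ‖-d‖ := IsUltrametricDist.norm_add_le_max _ _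
    _ = max ‖a‖ ‖d‖ := by rw [norm_neg]
    _ < α := max_lt ha hd
  have hb : ‖b‖ = α^2 := by
    rw [← hprod, norm_mul, hβ, sq]
  -- the denominator value
  have hDsmall : ‖x^2 + d*x‖ < α^2 := by
    calc ‖x^2 + d*x‖ ≤ max ‖x^2‖ ‖d*x‖ := IsUltrametricDist.norm_add_le_max _ _
    _ < α^2 := by
        rw [norm_pow, norm_mul]
        apply max_lt
        · exact pow_lt_pow_left₀ hx (norm_nonneg _) two_ne_zero
        · rw [sq]; exact mul_lt_mul'' hd hx (norm_nonneg _) (norm_nonneg _)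
  have hD : ‖x^2 + d*x + b‖ = α^2 := by
    rw [add_comm (x^2 + d*x) b, stmt6_aux (by rw [hb]; exact hDsmall), hb]
  have hDne : x^2 + d*x + b ≠ 0 := by
    intro h
    rw [h, norm_zero] at hD
    exact absurd hD.symm (by positivity)
  -- derivative
  have hp : HasDerivAt (fun y : K => a*y^2 + b*y) (a*(2*x) + b) x := by
    simpa [Pi.add_def] using (((hasDerivAt_pow 2 x).const_mul a).add
      ((hasDerivAt_id x).const_mul b))
  have hq : HasDerivAt (fun y : K => y^2 + d*y + b) (2*x + d) x := by
    simpa using (((hasDerivAt_pow 2 x).add ((hasDerivAt_id x).const_mul d)).add_const b)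
  have hder := hp.div hq hDne
  refine ⟨hx, _, hder, ?_⟩
  -- norm of the derivative
  have h2 : ∀ t : K, ‖2*t‖ ≤ ‖t‖ := by
    intro t
    calc ‖2*t‖ = ‖t + t‖ := by ring_nf
    _ ≤ max ‖t‖ ‖t‖ := IsUltrametricDist.norm_add_le_max _ _
    _ = ‖t‖ := max_self _
  have hnum : ‖(a*(2*x) + b) * (x^2 + d*x + b) - (a*x^2 + b*x) * (2*x + d)‖ = α^4 := by
    have key : (a*(2*x) + b) * (x^2 + d*x + b) - (a*x^2 + b*x) * (2*x + d)
        = b * (x^2 + d*x + b) +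
          (2*(a*x) * (x^2 + d*x + b) - (a*x^2 + b*x) * (2*x + d)) := by ring
    have hmain : ‖b * (x^2 + d*x + b)‖ = α^4 := by
      rw [norm_mul, hb, hD]; ring
    have hT1 : ‖2*(a*x) * (x^2 + d*x + b)‖ < α^4 := by
      rw [norm_mul, hD]
      calc ‖2*(a*x)‖ * α^2 ≤ ‖a*x‖ * α^2 := by
            exact mul_le_mul_of_nonneg_right (h2 _) (by positivity)
      _ < (α*α) * α^2 := by
            apply mul_lt_mul_of_pos_right _ (by positivity)
            rw [norm_mul]
            exact mul_lt_mul'' ha hx (norm_nonneg _) (norm_nonneg _)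
      _ = α^4 := by ring
    have hT2 : ‖(a*x^2 + b*x) * (2*x + d)‖ < α^4 := by
      rw [norm_mul]
      have h1 : ‖a*x^2 + b*x‖ < α^3 := by
        calc ‖a*x^2 + b*x‖ ≤ max ‖a*x^2‖ ‖b*x‖ := IsUltrametricDist.norm_add_le_max _ _
        _ < α^3 := by
            apply max_lt
            · rw [norm_mul, norm_pow]
              calc ‖a‖ * ‖x‖^2 ≤ ‖a‖ * α^2 := by
                    exact mul_le_mul_of_nonneg_left
                      (pow_le_pow_left₀ (norm_nonneg _) hx.le 2) (norm_nonneg _)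
              _ < α * α^2 := by exact mul_lt_mul_of_pos_right ha (by positivity)
              _ = α^3 := by ring
            · rw [norm_mul, hb]
              calc α^2 * ‖x‖ < α^2 * α := by
                    exact mul_lt_mul_of_pos_left hx (by positivity)
              _ = α^3 := by ring
      have h2' : ‖2*x + d‖ < α := by
        calc ‖2*x + d‖ ≤ max ‖2*x‖ ‖d‖ := IsUltrametricDist.norm_add_le_max _ _
        _ < α := max_lt (lt_of_le_of_lt (h2 x) hx) hd
      calc ‖a*x^2 + b*x‖ * ‖2*x + d‖ ≤ α^3 * ‖2*x + d‖ := by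
            exact mul_le_mul_of_nonneg_right h1.le (norm_nonneg _)
      _ < α^3 * α := mul_lt_mul_of_pos_left h2' (by positivity)
      _ = α^4 := by ring
    have hR : ‖2*(a*x) * (x^2 + d*x + b) - (a*x^2 + b*x) * (2*x + d)‖ < α^4 := by
      calc ‖2*(a*x) * (x^2 + d*x + b) - (a*x^2 + b*x) * (2*x + d)‖
          = ‖2*(a*x) * (x^2 + d*x + b) + -((a*x^2 + b*x) * (2*x + d))‖ := by ring_nf
      _ ≤ max ‖2*(a*x) * (x^2 + d*x + b)‖ ‖-((a*x^2 + b*x) * (2*x + d))‖ :=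
            IsUltrametricDist.norm_add_le_max _ _
      _ = max ‖2*(a*x) * (x^2 + d*x + b)‖ ‖(a*x^2 + b*x) * (2*x + d)‖ := by rw [norm_neg]
      _ < α^4 := max_lt hT1 hT2
    rw [key, stmt6_aux (by rw [hmain]; exact hR), hmain]
  rw [norm_div, hnum, norm_pow, hD]
  rw [show (α^2)^2 = α^4 by ring, div_self (by positivity)]
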